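/- Let E: ℓ²(ℤ) → ℝ be a C² functional such that E(0)=0, ∇E(0)=0, the Hessian D²E(0) is invertible with ‖D²E(0)^{-1}‖^{-1} = Δ₂ > 0, and |E(h) − ½⟨D²E(0)h,h⟩| ≤ κ‖h‖³ and ‖∇E(h) − D²E(0)h‖ ≤ κ‖h‖² for all h. Then setting e₀ = Δ₂³/(32κ²), every h in the connected component of 0 of {E ≤ e₀} with E(h) = e₀ satisfies ‖∇E(h)‖² ≥ Δ₂·e₀. -/

import Mathlib

open scoped RealInnerProductSpace

noncomputable abbrev l2Z : Type := lp (fun _ : ℤ => ℝ) 2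

section Aux

private lemma poly_small' (u : ℝ) (h1 : 0 ≤ u) (h2 : u ≤ 7/30) :
    (1/16 - 5*u^3/3)^2 ≥ u^2/32 := by
  nlinarith [sq_nonneg u, sq_nonneg (u - 7/30), mul_nonneg h1 h1,
    sq_nonneg (1/16 - 5*u^3/3 - 161/900*u), mul_nonneg (mul_nonneg h1 h1) h1]

private lemma poly_large' (u : ℝ) (h1 : 7/30 ≤ u) (h2 : u ≤ 1/2) :
    u^2*(1-u)^2 ≥ 1/32 := by
  nlinarith [mul_nonneg (sub_nonneg.2 h1) (sub_nonneg.2 h2), sq_nonneg (u*(1-u) - 161/900)]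

private lemma hom_small' (d v : ℝ) (hd : 0 < d) (h1 : 0 ≤ v) (h2 : 30*v ≤ 7*d) :
    (d^3/16 - 5*v^3/3)^2 ≥ d^4*v^2/32 := by
  have hu1 : 0 ≤ v/d := by positivity
  have hu2 : v/d ≤ 7/30 := by rw [div_le_iff₀ hd]; linarith
  have keyn := poly_small' (v/d) hu1 hu2
  have hvd : v = (v/d)*d := by field_simp
  rw [hvd]
  nlinarith [mul_nonneg (le_of_lt (pow_pos hd 6)) (sub_nonneg.2 keyn)]

private lemma hom_large' (d v : ℝ) (hd : 0 < d) (h1 : 7*d ≤ 30*v) (h2 : 2*v ≤ d) :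
    v^2*(d-v)^2 ≥ d^4/32 := by
  have hu1 : 7/30 ≤ v/d := by rw [le_div_iff₀ hd]; linarith
  have hu2 : v/d ≤ 1/2 := by rw [div_le_iff₀ hd]; linarith
  have keyn := poly_large' (v/d) hu1 hu2
  have hvd : v = (v/d)*d := by field_simp
  rw [hvd]
  nlinarith [mul_nonneg (le_of_lt (pow_pos hd 4)) (sub_nonneg.2 keyn)]

private lemma endgame_core' (d v w b : ℝ) (hd : 0 < d) (hv : 0 < v)
    (Hcs : b - v^3 ≤ w*v) (Hco : d*v^2 ≤ b) (Hup : d^3/32 ≤ b/2 + v^3/3)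
    (HrR : v < d/2) : d^4/32 ≤ w^2 := by
  rcases le_or_gt (30*v) (7*d) with hc | hc
  · have h3 : d^3/16 - 5*v^3/3 ≤ w*v := by linarith
    have hom := hom_small' d v hd hv.le hc
    have h33 := pow_le_pow_left₀ (by positivity : (0:ℝ) ≤ 30*v) hc 3
    have hMpos : 0 ≤ d^3/16 - 5*v^3/3 := by nlinarith [h33]
    have hsq := pow_le_pow_left₀ hMpos h3 2
    exact le_of_mul_le_mul_right (by nlinarith [hom, hsq]) (pow_pos hv 2)
  · have h4 : v*(d-v) ≤ w := le_of_mul_le_mul_right (by nlinarith [Hcs, Hco]) hv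
    have hom := hom_large' d v hd (by linarith) (by linarith)
    have hnn : 0 ≤ v*(d-v) := by nlinarith
    nlinarith [pow_le_pow_left₀ hnn h4 2, hom]

private lemma endgame' (d k e r G a : ℝ) (hd : 0 < d) (hk : 0 < k) (hr : 0 < r)
    (he : e = d^3/(32*k^2))
    (Hcs : a - k*r^3 ≤ G*r)
    (Hco : d*r^2 ≤ a)
    (Hup : e ≤ a/2 + k*r^3/3)
    (HrR : k*r < d/2) :
    G^2 ≥ d*e := by
  have key : d^4/32 ≤ (k*G)^2 := by
    apply endgame_core' d (k*r) (k*G) (k^2*a) hd (by positivity)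
    · nlinarith [mul_le_mul_of_nonneg_left Hcs (sq_nonneg k)]
    · nlinarith [mul_le_mul_of_nonneg_left Hco (sq_nonneg k)]
    · have c2 := mul_le_mul_of_nonneg_left Hup (sq_nonneg k)
      have he2 : k^2*e = d^3/32 := by rw [he]; field_simp
      nlinarith [c2, he2]
    · exact HrR
  rw [he, ge_iff_le, show d*(d^3/(32*k^2)) = d^4/(32*k^2) by ring,
    div_le_iff₀ (by positivity : (0:ℝ) < 32*k^2)]
  nlinarith [key]

private lemma taylor_bound'
    (E : l2Z → ℝ) (hE : ContDiff ℝ 2 E) (hE0 : E 0 = 0)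
    (g : l2Z → l2Z)
    (hgrad : ∀ h x : l2Z, fderiv ℝ E h x = ⟪g h, x⟫)
    (A : l2Z →L[ℝ] l2Z) (κ : ℝ)
    (hgbound : ∀ h : l2Z, ‖g h - A h‖ ≤ κ * ‖h‖ ^ 2)
    (x : l2Z) :
    |E x - (1/2) * ⟪A x, x⟫| ≤ (κ/3) * ‖x‖ ^ 3 := by
  set r := ‖x‖ with hr
  set a := ⟪A x, x⟫ with ha
  set c := κ * r ^ 3 with hc
  have hdiff : ∀ t : ℝ, HasDerivAt (fun t : ℝ => E (t • x)) ⟪g (t • x), x⟫ t := by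
    intro t
    have h1 : HasDerivAt (fun t : ℝ => t • x) x t := by
      simpa using (hasDerivAt_id t).smul_const x
    have h2 : HasFDerivAt E (fderiv ℝ E (t • x)) (t • x) :=
      (hE.differentiable (by norm_num) (t • x)).hasFDerivAt
    have h3 := h2.comp_hasDerivAt t h1
    simp only [hgrad] at h3
    exact h3
  have hbound : ∀ t ∈ Set.Icc (0:ℝ) 1, |⟪g (t • x), x⟫ - t * a| ≤ t ^ 2 * c := by
    intro t ht
    have h1 : ⟪g (t • x), x⟫ - t * a = ⟪g (t • x) - A (t • x), x⟫ := by
      rw [inner_sub_left]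
      simp [ha, map_smul, real_inner_smul_left]
    rw [h1]
    calc |⟪g (t • x) - A (t • x), x⟫| ≤ ‖g (t • x) - A (t • x)‖ * ‖x‖ :=
          abs_real_inner_le_norm _ _
      _ ≤ (κ * ‖t • x‖ ^ 2) * ‖x‖ := by gcongr; exact hgbound _
      _ = t ^ 2 * c := by
          rw [norm_smul, Real.norm_eq_abs, abs_of_nonneg ht.1, hc]
          ring
  have p1 : ∀ t : ℝ, HasDerivAt (fun t : ℝ => t ^ 2 / 2 * a) (t * a) t := by
    intro t
    have := ((hasDerivAt_pow 2 t).div_const 2).mul_const a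
    refine this.congr_deriv ?_
    push_cast; ring
  have p2 : ∀ t : ℝ, HasDerivAt (fun t : ℝ => t ^ 3 / 3 * c) (t ^ 2 * c) t := by
    intro t
    have := ((hasDerivAt_pow 3 t).div_const 3).mul_const c
    refine this.congr_deriv ?_
    push_cast; ring
  have upper : E x ≤ 1 / 2 * a + c / 3 := by
    have hF : ∀ t : ℝ, HasDerivAt (fun t : ℝ => t ^ 2 / 2 * a + t ^ 3 / 3 * c - E (t • x))
        (t * a + t ^ 2 * c - ⟪g (t • x), x⟫) t :=
      fun t => ((p1 t).add (p2 t)).sub (hdiff t)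
    have mono : MonotoneOn (fun t : ℝ => t ^ 2 / 2 * a + t ^ 3 / 3 * c - E (t • x))
        (Set.Icc (0:ℝ) 1) := by
      apply monotoneOn_of_deriv_nonneg (convex_Icc 0 1)
      · exact fun t _ => (hF t).continuousAt.continuousWithinAt
      · intro t ht
        exact (hF t).differentiableAt.differentiableWithinAt
      · intro t ht
        rw [(hF t).deriv]
        rw [interior_Icc] at ht
        have h2 := (abs_le.mp (hbound t ⟨ht.1.le, ht.2.le⟩)).2
        linarith
    have h01 := mono (Set.mem_Icc.2 ⟨le_refl 0, zero_le_one⟩)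
      (Set.mem_Icc.2 ⟨zero_le_one, le_refl 1⟩) zero_le_one
    simp [hE0] at h01
    linarith
  have lower : 1 / 2 * a - c / 3 ≤ E x := by
    have hF : ∀ t : ℝ, HasDerivAt (fun t : ℝ => E (t • x) + t ^ 3 / 3 * c - t ^ 2 / 2 * a)
        (⟪g (t • x), x⟫ + t ^ 2 * c - t * a) t :=
      fun t => ((hdiff t).add (p2 t)).sub (p1 t)
    have mono : MonotoneOn (fun t : ℝ => E (t • x) + t ^ 3 / 3 * c - t ^ 2 / 2 * a)
        (Set.Icc (0:ℝ) 1) := by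
      apply monotoneOn_of_deriv_nonneg (convex_Icc 0 1)
      · exact fun t _ => (hF t).continuousAt.continuousWithinAt
      · intro t ht
        exact (hF t).differentiableAt.differentiableWithinAt
      · intro t ht
        rw [(hF t).deriv]
        rw [interior_Icc] at ht
        have h2 := (abs_le.mp (hbound t ⟨ht.1.le, ht.2.le⟩)).1
        linarith
    have h01 := mono (Set.mem_Icc.2 ⟨le_refl 0, zero_le_one⟩)
      (Set.mem_Icc.2 ⟨zero_le_one, le_refl 1⟩) zero_le_one
    simp [hE0] at h01
    linarith
  rw [abs_le]
  constructor <;> [linarith; linarith]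

private lemma norm_lt_of_mem_component'
    (E : l2Z → ℝ) (Δ₂ κ e₀ : ℝ) (hΔ₂ : 0 < Δ₂) (hκ : 0 < κ)
    (he₀ : e₀ = Δ₂ ^ 3 / (32 * κ ^ 2)) (hE0 : E 0 = 0)
    (hlow : ∀ x : l2Z, Δ₂ / 2 * ‖x‖ ^ 2 - κ / 3 * ‖x‖ ^ 3 ≤ E x)
    (h : l2Z) (hmem : h ∈ connectedComponentIn {x : l2Z | E x ≤ e₀} 0) :
    κ * ‖h‖ < Δ₂ / 2 := by
  set S := connectedComponentIn {x : l2Z | E x ≤ e₀} 0 with hS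
  have he₀pos : 0 < e₀ := by rw [he₀]; positivity
  have h0 : (0 : l2Z) ∈ {x : l2Z | E x ≤ e₀} := by simp [hE0, he₀pos.le]
  by_contra hcon
  push_neg at hcon
  set R := Δ₂ / (2 * κ) with hR
  have hRpos : 0 < R := by positivity
  have hRh : R ≤ ‖h‖ := by
    rw [hR, div_le_iff₀ (by positivity)]
    nlinarith
  have hpre : IsPreconnected ((fun x : l2Z => ‖x‖) '' S) :=
    isPreconnected_connectedComponentIn.image _ continuous_norm.continuousOn
  have hord := hpre.ordConnected
  have h0mem : (0 : ℝ) ∈ (fun x : l2Z => ‖x‖) '' S :=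
    ⟨0, mem_connectedComponentIn h0, by simp⟩
  have hhmem : ‖h‖ ∈ (fun x : l2Z => ‖x‖) '' S := ⟨h, hmem, rfl⟩
  have hRmem : R ∈ (fun x : l2Z => ‖x‖) '' S :=
    hord.out h0mem hhmem ⟨hRpos.le, hRh⟩
  obtain ⟨y, hyS, hy⟩ := hRmem
  have hyE : E y ≤ e₀ := connectedComponentIn_subset {x : l2Z | E x ≤ e₀} 0 hyS
  have hlowy := hlow y
  simp only at hy
  rw [hy] at hlowy
  have hgt : e₀ < Δ₂ / 2 * R ^ 2 - κ / 3 * R ^ 3 := by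
    rw [he₀, hR]
    have h1 : Δ₂ / 2 * (Δ₂ / (2 * κ)) ^ 2 - κ / 3 * (Δ₂ / (2 * κ)) ^ 3
        = Δ₂ ^ 3 / (12 * κ ^ 2) := by
      field_simp
      ring
    rw [h1]
    exact div_lt_div_of_pos_left (by positivity) (by positivity) (by nlinarith)
  linarith

end Aux

theorem gradient_lower_bound_on_level_set
    (E : l2Z → ℝ) (hE : ContDiff ℝ 2 E) (hE0 : E 0 = 0)
    (g : l2Z → l2Z)
    (hgrad : ∀ h x : l2Z, fderiv ℝ E h x = ⟪g h, x⟫)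
    (hg0 : g 0 = 0)
    (A : l2Z →L[ℝ] l2Z) (hAinv : ∃ Ainv : l2Z →L[ℝ] l2Z,
      Ainv.comp A = ContinuousLinearMap.id ℝ l2Z ∧
      A.comp Ainv = ContinuousLinearMap.id ℝ l2Z)
    (Δ₂ κ : ℝ) (hΔ₂ : 0 < Δ₂) (hκ : 0 < κ)
    (hcoercive : ∀ h : l2Z, ⟪A h, h⟫ ≥ Δ₂ * ‖h‖ ^ 2)
    (hEbound : ∀ h : l2Z, |E h - (1 / 2) * ⟪A h, h⟫| ≤ κ * ‖h‖ ^ 3)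
    (hgbound : ∀ h : l2Z, ‖g h - A h‖ ≤ κ * ‖h‖ ^ 2)
    (e₀ : ℝ) (he₀ : e₀ = Δ₂ ^ 3 / (32 * κ ^ 2)) :
    ∀ h : l2Z, h ∈ connectedComponentIn {x : l2Z | E x ≤ e₀} 0 → E h = e₀ →
      ‖g h‖ ^ 2 ≥ Δ₂ * e₀ := by
  have htaylor := taylor_bound' E hE hE0 g hgrad A κ hgbound
  have hlow : ∀ x : l2Z, Δ₂ / 2 * ‖x‖ ^ 2 - κ / 3 * ‖x‖ ^ 3 ≤ E x := by
    intro x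
    have h1 := (abs_le.mp (htaylor x)).1
    have h2 := hcoercive x
    linarith
  intro h hmem hEh
  have he₀pos : 0 < e₀ := by rw [he₀]; positivity
  have hne : h ≠ 0 := by
    intro hzero
    rw [hzero, hE0] at hEh
    linarith
  have hrpos : 0 < ‖h‖ := norm_pos_iff.mpr hne
  have HrR : κ * ‖h‖ < Δ₂ / 2 :=
    norm_lt_of_mem_component' E Δ₂ κ e₀ hΔ₂ hκ he₀ hE0 hlow h hmem
  -- Cauchy–Schwarz bound
  have Hcs : ⟪A h, h⟫ - κ * ‖h‖ ^ 3 ≤ ‖g h‖ * ‖h‖ := by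
    have h1 : ⟪g h, h⟫ ≤ ‖g h‖ * ‖h‖ := real_inner_le_norm _ _
    have h2 : |⟪g h - A h, h⟫| ≤ κ * ‖h‖ ^ 3 := by
      calc |⟪g h - A h, h⟫| ≤ ‖g h - A h‖ * ‖h‖ := abs_real_inner_le_norm _ _
        _ ≤ (κ * ‖h‖ ^ 2) * ‖h‖ := by gcongr; exact hgbound h
        _ = κ * ‖h‖ ^ 3 := by ring
    have h3 : ⟪g h, h⟫ = ⟪A h, h⟫ + ⟪g h - A h, h⟫ := by
      rw [inner_sub_left]; ring
    have h4 := (abs_le.mp h2).1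
    linarith
  have Hco : Δ₂ * ‖h‖ ^ 2 ≤ ⟪A h, h⟫ := hcoercive h
  have Hup : e₀ ≤ ⟪A h, h⟫ / 2 + κ * ‖h‖ ^ 3 / 3 := by
    have h1 := (abs_le.mp (htaylor h)).2
    rw [hEh] at h1
    have h2 : κ / 3 * ‖h‖ ^ 3 = κ * ‖h‖ ^ 3 / 3 := by ring
    linarith
  exact endgame' Δ₂ κ e₀ ‖h‖ ‖g h‖ ⟪A h, h⟫ hΔ₂ hκ hrpos he₀ Hcs Hco Hup HrR
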